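/- Let R be an infinite reduced indecomposable commutative unital ring and f ∈ R[x]. If f(c) = 0 for every c ∈ R, then f = 0. -/

import Mathlib

open Polynomial

private lemma pow_idem_aux {R : Type*} [CommRing R] (a : R) (d : ℕ) (hd : 1 ≤ d)
    (h : a ^ (d + 2) = a ^ 2) : IsIdempotentElem (a ^ (2 * d)) := by
  have step : ∀ m, 2 ≤ m → a ^ (m + d) = a ^ m := by
    intro m hm
    obtain ⟨k, rfl⟩ : ∃ k, m = 2 + k := ⟨m - 2, by omega⟩
    calc a ^ (2 + k + d) = a ^ k * a ^ (d + 2) := by rw [← pow_add]; ring_nf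
    _ = a ^ k * a ^ 2 := by rw [h]
    _ = a ^ (2 + k) := by rw [← pow_add]; ring_nf
  have key : ∀ j : ℕ, a ^ (2 * d + j * d) = a ^ (2 * d) := by
    intro j
    induction j with
    | zero => simp
    | succ j ih =>
      have : 2 * d + (j + 1) * d = (2 * d + j * d) + d := by ring
      rw [this, step _ (by omega), ih]
  have h2 := key 2
  unfold IsIdempotentElem
  rw [← pow_add]
  exact h2

open Polynomial in
theorem stmt_14 {R : Type*} [CommRing R] [Infinite R] [IsReduced R]
    (hind : ∀ e : R, IsIdempotentElem e → e = 0 ∨ e = 1)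
    (f : R[X]) (hf : ∀ c : R, f.eval c = 0) :
    f = 0 := by
  classical
  by_contra hf0
  set n := f.natDegree with hn
  set d := n.factorial with hdd
  have hd : 1 ≤ d := n.factorial_pos
  set L := d + 1 with hL
  set a := f.leadingCoeff with ha
  have ha0 : a ≠ 0 := Polynomial.leadingCoeff_ne_zero.mpr hf0
  -- key vanishing
  have key : ∀ c : R, a * (c ^ L - c) = 0 := by
    intro c
    have hmem : ∀ p : Ideal R, p.IsPrime → a * (c ^ L - c) ∈ p := by
      intro p hp
      by_cases hap : a ∈ p
      · exact Ideal.mul_mem_right _ _ hap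
      · -- pass to the quotient domain
        let φ := Ideal.Quotient.mk p
        let D := R ⧸ p
        have hsurj : Function.Surjective φ := Ideal.Quotient.mk_surjective
        set g : D[X] := f.map φ with hg
        have hg0 : g ≠ 0 := by
          intro h
          have : g.coeff n = 0 := by rw [h]; simp
          rw [hg, Polynomial.coeff_map] at this
          exact hap (by rwa [Ideal.Quotient.eq_zero_iff_mem] at this)
        have hroot : ∀ x : D, g.IsRoot x := by
          intro x
          obtain ⟨c', rfl⟩ := hsurj x
          have : g.eval (φ c') = φ (f.eval c') := by
            rw [hg, Polynomial.eval_map, Polynomial.eval₂_hom]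
          rw [Polynomial.IsRoot, this, hf c', map_zero]
        have hfin : Finite D := by
          have : {x : D | g.IsRoot x}.Finite := Polynomial.finite_setOf_isRoot hg0
          have huniv : {x : D | g.IsRoot x} = Set.univ := by
            ext x
            simp only [Set.mem_setOf_eq, Set.mem_univ, iff_true]
            exact hroot x
          rw [huniv, Set.finite_univ_iff] at this
          exact this
        haveI := hfin
        haveI : Fintype D := Fintype.ofFinite D
        letI : Field D := Fintype.fieldOfDomain D
        set q := Fintype.card D with hq
        have hq2 : 2 ≤ q := Fintype.one_lt_card
        have hqn : q ≤ n := by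
          have hsub : (Finset.univ : Finset D) ⊆ g.roots.toFinset := by
            intro x _
            rw [Multiset.mem_toFinset, Polynomial.mem_roots hg0]
            exact hroot x
          calc q = (Finset.univ : Finset D).card := rfl
            _ ≤ g.roots.toFinset.card := Finset.card_le_card hsub
            _ ≤ Multiset.card g.roots := Multiset.toFinset_card_le _
            _ ≤ g.natDegree := Polynomial.card_roots' g
            _ ≤ n := Polynomial.natDegree_map_le
        -- in D, x^L = x
        have hpow : ∀ x : D, x ^ L = x := by
          intro x
          by_cases hx : x = 0
          · rw [hx, zero_pow (by omega : L ≠ 0)]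
          · have h1 : x ^ (q - 1) = 1 := FiniteField.pow_card_sub_one_eq_one x hx
            have hdvd : (q - 1) ∣ d := Nat.dvd_factorial (by omega) (by omega)
            obtain ⟨k, hk⟩ := hdvd
            calc x ^ L = x ^ d * x := by rw [hL, pow_succ]
              _ = (x ^ (q - 1)) ^ k * x := by rw [← pow_mul, ← hk]
              _ = x := by rw [h1, one_pow, one_mul]
        have : c ^ L - c ∈ p := by
          rw [← Ideal.Quotient.eq_zero_iff_mem]
          have : φ (c ^ L - c) = (φ c) ^ L - φ c := by
            simp [map_sub, map_pow]
          rw [this, hpow (φ c), sub_self]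
        exact Ideal.mul_mem_left _ _ this
    have hnil : a * (c ^ L - c) ∈ nilradical R := by
      rw [nilradical_eq_sInf]
      exact Ideal.mem_sInf.mpr fun {J} hJ => hmem J hJ
    exact IsReduced.eq_zero _ (mem_nilradical.mp hnil)
  -- a is a unit
  have hAA : a ^ (d + 2) = a ^ 2 := by
    have h2 := key a
    rw [hL] at h2
    linear_combination h2
  have hidem := pow_idem_aux a d hd hAA
  have haunit : IsUnit a := by
    rcases hind _ hidem with h0 | h1
    · exact absurd (IsReduced.eq_zero a ⟨2 * d, h0⟩) ha0
    · refine IsUnit.of_mul_eq_one (a := a) (a ^ (2 * d - 1)) ?_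
      rw [← pow_succ']
      have : 2 * d - 1 + 1 = 2 * d := by omega
      rw [this, h1]
  -- hence every c satisfies c^L = c
  have hall : ∀ c : R, c ^ L = c := by
    intro c
    have := key c
    rw [haunit.mul_right_eq_zero] at this
    exact sub_eq_zero.mp this
  -- every element is zero or a unit
  have hzu : ∀ c : R, c = 0 ∨ IsUnit c := by
    intro c
    have hCC : c ^ (d + 2) = c ^ 2 := by
      have hc := hall c
      rw [hL] at hc
      linear_combination c * hc
    rcases hind _ (pow_idem_aux c d hd hCC) with h0 | h1
    · exact Or.inl (IsReduced.eq_zero c ⟨2 * d, h0⟩)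
    · refine Or.inr (IsUnit.of_mul_eq_one (a := c) (c ^ (2 * d - 1)) ?_)
      rw [← pow_succ']
      have : 2 * d - 1 + 1 = 2 * d := by omega
      rw [this, h1]
  -- R is a domain
  haveI : NoZeroDivisors R := by
    constructor
    intro x y hxy
    rcases hzu x with h0 | hu
    · exact Or.inl h0
    · exact Or.inr (by rwa [hu.mul_right_eq_zero] at hxy)
  haveI : IsDomain R := NoZeroDivisors.to_isDomain R
  -- all elements are roots of X^L - X, contradiction with Infinite
  set g : R[X] := X ^ L - X with hg
  have hg0 : g ≠ 0 := by
    intro h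
    have : g.coeff L = 0 := by rw [h]; simp
    rw [hg] at this
    have hL1 : ¬ ((1:ℕ) = L) := by omega
    simp only [Polynomial.coeff_sub, Polynomial.coeff_X_pow, Polynomial.coeff_X, if_pos rfl,
      if_neg hL1] at this
    simp at this
  have hfin : ({x : R | g.IsRoot x}).Finite := Polynomial.finite_setOf_isRoot hg0
  have huniv : {x : R | g.IsRoot x} = Set.univ := by
    ext x
    simp [hg, Polynomial.IsRoot, hall x, sub_self]
  rw [huniv] at hfin
  exact Set.infinite_univ hfin
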